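/- Let P be a convex polytope in R^d, and let x be a point in R^d. Suppose there exist points p, q in P with dist(p,q) = diam(P) and angle(p, x, q) = θ > π/2. Let y be a point of P farthest from x, and z a point of P farthest from y. Then dist(y,z) ≥ diam(P) / (2 sin(π/2 − θ/4)). -/

import Mathlib

open Real Metric EuclideanGeometry

lemma alg_aux (a1 a2 b c : ℝ) (ha1 : 0 ≤ a1) (ha2 : 0 ≤ a2) (h1b : a1 ≤ b) (h2b : a2 ≤ b)
    (hc0 : 0 ≤ c) (hc : c ^ 2 ≤ 1 / 2) :
    a1 ^ 2 + a2 ^ 2 - 2 * a1 * a2 * (2 * c ^ 2 - 1) ≤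
      2 * (1 + c) * (a1 ^ 2 + b ^ 2 - 2 * a1 * b * c) := by
  have t1 : 0 ≤ (1 + 2 * c) * (a1 - b) ^ 2 := by positivity
  have t2 : 0 ≤ (b - a2) * (2 * a1 * (1 - 2 * c ^ 2) + a2 + b) := by
    apply mul_nonneg (by linarith)
    nlinarith
  nlinarith [t1, t2]

lemma real_key (a1 a2 b dpq dyp c k cα : ℝ)
    (ha1 : 0 ≤ a1) (ha2 : 0 ≤ a2) (hb1 : a1 ≤ b) (hb2 : a2 ≤ b)
    (hdpq : 0 ≤ dpq) (hdyp : 0 ≤ dyp)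
    (hc0 : 0 ≤ c) (hcsq : c ^ 2 ≤ 1 / 2) (hk0 : 0 < k) (hk2 : (2 * k) ^ 2 = 2 * (1 + c))
    (hcα : cα ≤ c)
    (hlaw1 : dpq * dpq = a1 * a1 + a2 * a2 - 2 * a1 * a2 * (2 * c ^ 2 - 1))
    (hlaw2 : dyp * dyp = b * b + a1 * a1 - 2 * b * a1 * cα) :
    dpq / (2 * k) ≤ dyp := by
  have hb0 : 0 ≤ b := le_trans ha1 hb1
  have hyp_lb : b * b + a1 * a1 - 2 * b * a1 * c ≤ dyp * dyp := by
    have h := mul_le_mul_of_nonneg_left hcα (by positivity : (0:ℝ) ≤ 2 * b * a1)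
    linarith [hlaw2]
  have halg := alg_aux a1 a2 b c ha1 ha2 hb1 hb2 hc0 hcsq
  have hkey : dpq ^ 2 ≤ (2 * k) ^ 2 * dyp ^ 2 := by
    rw [hk2]
    have h3 := mul_le_mul_of_nonneg_left hyp_lb (by linarith : (0:ℝ) ≤ 2 * (1 + c))
    nlinarith [halg, h3, hlaw1]
  have hfin : dpq ≤ 2 * k * dyp := by
    have h := Real.sqrt_le_sqrt hkey
    rwa [Real.sqrt_sq hdpq, show (2 * k) ^ 2 * dyp ^ 2 = (2 * k * dyp) ^ 2 by ring,
      Real.sqrt_sq (by positivity)] at h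
  rw [div_le_iff₀ (by positivity)]
  linarith

lemma far_ineq {d : ℕ} (x p q y : EuclideanSpace ℝ (Fin d)) {θ : ℝ}
    (hθ1 : π / 2 < θ) (hθ2 : θ ≤ π) (hangle : ∠ p x q = θ)
    (hα : θ / 2 ≤ ∠ p x y) (hbp : dist x p ≤ dist x y) (hbq : dist x q ≤ dist x y) :
    dist p q / (2 * Real.cos (θ / 4)) ≤ dist y p := by
  have hπ := Real.pi_pos
  have hk0 : 0 < Real.cos (θ / 4) :=
    Real.cos_pos_of_mem_Ioo ⟨by linarith, by linarith⟩
  have hc0 : 0 ≤ Real.cos (θ / 2) :=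
    Real.cos_nonneg_of_mem_Icc ⟨by linarith, by linarith⟩
  have hcle : Real.cos (θ / 2) ≤ Real.sqrt 2 / 2 := by
    have h := Real.cos_le_cos_of_nonneg_of_le_pi (x := π / 4) (y := θ / 2)
      (by linarith) (by linarith) (by linarith)
    rwa [Real.cos_pi_div_four] at h
  have hcsq : Real.cos (θ / 2) ^ 2 ≤ 1 / 2 := by
    nlinarith [Real.sq_sqrt (by norm_num : (0:ℝ) ≤ 2), Real.sqrt_nonneg 2]
  have hcosθ : Real.cos θ = 2 * Real.cos (θ / 2) ^ 2 - 1 := by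
    have h : (2:ℝ) * (θ / 2) = θ := by ring
    conv_lhs => rw [← h]
    rw [Real.cos_two_mul]
  have hck : (2 * Real.cos (θ / 4)) ^ 2 = 2 * (1 + Real.cos (θ / 2)) := by
    have h : (2:ℝ) * (θ / 4) = θ / 2 := by ring
    rw [← h, Real.cos_two_mul]
    ring
  have hcosα : Real.cos (∠ p x y) ≤ Real.cos (θ / 2) :=
    Real.cos_le_cos_of_nonneg_of_le_pi (by linarith) (EuclideanGeometry.angle_le_pi p x y) hα
  have hlaw1 := EuclideanGeometry.law_cos p x q
  rw [hangle, hcosθ, dist_comm p x, dist_comm q x] at hlaw1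
  have hlaw2 := EuclideanGeometry.law_cos y x p
  rw [EuclideanGeometry.angle_comm y x p, dist_comm y x, dist_comm p x] at hlaw2
  exact real_key (dist x p) (dist x q) (dist x y) (dist p q) (dist y p)
    (Real.cos (θ / 2)) (Real.cos (θ / 4)) (Real.cos (∠ p x y))
    dist_nonneg dist_nonneg hbp hbq dist_nonneg dist_nonneg
    hc0 hcsq hk0 hck hcosα hlaw1 hlaw2

lemma div_ineq_aux (ixy iyz ixz u v nx ny nz : ℝ) (hnx : 0 < nx) (hny : 0 < ny)
    (hnz : 0 < nz) (key : ixy * iyz - u * v * ny ^ 2 ≤ ixz * ny ^ 2) :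
    ixy / (nx * ny) * (iyz / (ny * nz)) - u / nx * (v / nz) ≤ ixz / (nx * nz) := by
  rw [div_mul_div_comm, div_mul_div_comm, div_sub_div _ _ (by positivity) (by positivity),
    div_le_div_iff₀ (by positivity) (by positivity)]
  nlinarith [mul_le_mul_of_nonneg_right key (by positivity : (0:ℝ) ≤ nx ^ 2 * nz ^ 2)]

open scoped RealInnerProductSpace in
/-- Spherical triangle inequality for angles between vectors. -/
theorem my_angle_triangle {V : Type*} [NormedAddCommGroup V] [InnerProductSpace ℝ V]
    (x y z : V) :
    InnerProductGeometry.angle x z ≤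
      InnerProductGeometry.angle x y + InnerProductGeometry.angle y z := by
  by_cases hy : y = 0
  · subst hy
    rw [InnerProductGeometry.angle_zero_right, InnerProductGeometry.angle_zero_left]
    linarith [InnerProductGeometry.angle_le_pi x z, Real.pi_pos]
  by_cases hx : x = 0
  · subst hx
    rw [InnerProductGeometry.angle_zero_left, InnerProductGeometry.angle_zero_left]
    linarith [InnerProductGeometry.angle_nonneg y z]
  by_cases hz : z = 0
  · subst hz
    rw [InnerProductGeometry.angle_zero_right, InnerProductGeometry.angle_zero_right]
    linarith [InnerProductGeometry.angle_nonneg x y]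
  set A := InnerProductGeometry.angle x y with hA
  set B := InnerProductGeometry.angle y z with hB
  set C := InnerProductGeometry.angle x z with hC
  rcases le_or_gt π (A + B) with hπ | hπ
  · linarith [InnerProductGeometry.angle_le_pi x z]
  have hnx : (0:ℝ) < ‖x‖ := norm_pos_iff.2 hx
  have hny : (0:ℝ) < ‖y‖ := norm_pos_iff.2 hy
  have hnz : (0:ℝ) < ‖z‖ := norm_pos_iff.2 hz
  obtain ⟨Px, hPx⟩ : ∃ v : V, v = x - (⟪x, y⟫ / ‖y‖ ^ 2) • y := ⟨_, rfl⟩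
  obtain ⟨Pz, hPz⟩ : ∃ v : V, v = z - (⟪z, y⟫ / ‖y‖ ^ 2) • y := ⟨_, rfl⟩
  have hyy : ⟪y, y⟫ = ‖y‖ ^ 2 := real_inner_self_eq_norm_sq y
  have hny2 : (‖y‖:ℝ) ^ 2 ≠ 0 := by positivity
  have hPxx : ‖Px‖ ^ 2 = ‖x‖ ^ 2 - ⟪x, y⟫ ^ 2 / ‖y‖ ^ 2 := by
    rw [← real_inner_self_eq_norm_sq, hPx]
    simp only [inner_sub_left, inner_sub_right, inner_smul_left, inner_smul_right,
      RCLike.conj_to_real, real_inner_self_eq_norm_sq x, hyy, real_inner_comm y x]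
    field_simp
    ring
  have hPzz : ‖Pz‖ ^ 2 = ‖z‖ ^ 2 - ⟪z, y⟫ ^ 2 / ‖y‖ ^ 2 := by
    rw [← real_inner_self_eq_norm_sq, hPz]
    simp only [inner_sub_left, inner_sub_right, inner_smul_left, inner_smul_right,
      RCLike.conj_to_real, real_inner_self_eq_norm_sq z, hyy, real_inner_comm y z]
    field_simp
    ring
  have hPxz : ⟪Px, Pz⟫ = ⟪x, z⟫ - ⟪x, y⟫ * ⟪z, y⟫ / ‖y‖ ^ 2 := by
    rw [hPx, hPz]
    simp only [inner_sub_left, inner_sub_right, inner_smul_left, inner_smul_right,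
      RCLike.conj_to_real, hyy, real_inner_comm y z]
    field_simp
    ring
  -- sin A = ‖Px‖ / ‖x‖
  have hsinA : Real.sin A = ‖Px‖ / ‖x‖ := by
    have h1 := InnerProductGeometry.sin_angle_mul_norm_mul_norm x y
    have h2 : ⟪x, x⟫ * ⟪y, y⟫ - ⟪x, y⟫ * ⟪x, y⟫ = (‖Px‖ * ‖y‖) ^ 2 := by
      rw [mul_pow, hPxx, real_inner_self_eq_norm_sq x, hyy]
      field_simp
    rw [h2, Real.sqrt_sq (by positivity)] at h1
    rw [hA]
    field_simp at h1 ⊢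
    nlinarith [h1]
  have hsinB : Real.sin B = ‖Pz‖ / ‖z‖ := by
    have h1 := InnerProductGeometry.sin_angle_mul_norm_mul_norm y z
    have h2 : ⟪y, y⟫ * ⟪z, z⟫ - ⟪y, z⟫ * ⟪y, z⟫ = (‖Pz‖ * ‖y‖) ^ 2 := by
      rw [mul_pow, hPzz, real_inner_self_eq_norm_sq z, hyy, real_inner_comm y z]
      field_simp
    rw [h2, Real.sqrt_sq (by positivity)] at h1
    rw [hB]
    field_simp at h1 ⊢
    nlinarith [h1]
  have hcosA : Real.cos A = ⟪x, y⟫ / (‖x‖ * ‖y‖) := InnerProductGeometry.cos_angle x y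
  have hcosB : Real.cos B = ⟪y, z⟫ / (‖y‖ * ‖z‖) := InnerProductGeometry.cos_angle y z
  have hcosC : Real.cos C = ⟪x, z⟫ / (‖x‖ * ‖z‖) := InnerProductGeometry.cos_angle x z
  -- Cauchy–Schwarz
  have hcauchy : -(‖Px‖ * ‖Pz‖) ≤ ⟪Px, Pz⟫ :=
    neg_le_of_abs_le (abs_real_inner_le_norm Px Pz)
  have key' : ⟪x, y⟫ * ⟪y, z⟫ - ‖Px‖ * ‖Pz‖ * ‖y‖ ^ 2 ≤ ⟪x, z⟫ * ‖y‖ ^ 2 := by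
    have h1 := mul_le_mul_of_nonneg_right hcauchy (sq_nonneg ‖y‖)
    rw [hPxz] at h1
    have h3 : (⟪x, z⟫ - ⟪x, y⟫ * ⟪z, y⟫ / ‖y‖ ^ 2) * ‖y‖ ^ 2
        = ⟪x, z⟫ * ‖y‖ ^ 2 - ⟪x, y⟫ * ⟪z, y⟫ := by field_simp
    rw [h3, real_inner_comm y z] at h1
    linarith
  have hkey : Real.cos (A + B) ≤ Real.cos C := by
    rw [Real.cos_add, hcosA, hcosB, hcosC, hsinA, hsinB]
    exact div_ineq_aux _ _ _ _ _ _ _ _ hnx hny hnz key'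
  by_contra hcon
  push_neg at hcon
  have := Real.strictAntiOn_cos
    ⟨add_nonneg (InnerProductGeometry.angle_nonneg x y) (InnerProductGeometry.angle_nonneg y z), hπ.le⟩
    ⟨InnerProductGeometry.angle_nonneg x z, InnerProductGeometry.angle_le_pi x z⟩ hcon
  linarith

theorem stmt_0 {d : ℕ} (P : Set (EuclideanSpace ℝ (Fin d)))
    (hPc : IsCompact P) (hPconv : Convex ℝ P)
    (x p q y z : EuclideanSpace ℝ (Fin d)) (θ : ℝ)
    (hp : p ∈ P) (hq : q ∈ P)
    (hpq : dist p q = Metric.diam P)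
    (hangle : ∠ p x q = θ) (hθ : π / 2 < θ)
    (hy : y ∈ P) (hyfar : ∀ y' ∈ P, dist x y' ≤ dist x y)
    (hz : z ∈ P) (hzfar : ∀ z' ∈ P, dist y z' ≤ dist y z) :
    Metric.diam P / (2 * Real.sin (π / 2 - θ / 4)) ≤ dist y z := by
  have hθπ : θ ≤ π := hangle ▸ EuclideanGeometry.angle_le_pi p x q
  rw [← hpq, Real.sin_pi_div_two_sub]
  have ht : ∠ p x q ≤ ∠ p x y + ∠ y x q :=
    my_angle_triangle (p -ᵥ x) (y -ᵥ x) (q -ᵥ x)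
  rcases le_or_gt (θ / 2) (∠ p x y) with h | h
  · calc dist p q / (2 * Real.cos (θ / 4))
        ≤ dist y p := far_ineq x p q y hθ hθπ hangle h (hyfar p hp) (hyfar q hq)
      _ ≤ dist y z := hzfar p hp
  · have h2 : θ / 2 ≤ ∠ q x y := by
      rw [EuclideanGeometry.angle_comm q x y]
      rw [hangle] at ht
      linarith
    have hangle' : ∠ q x p = θ := by rw [EuclideanGeometry.angle_comm q x p]; exact hangle
    calc dist p q / (2 * Real.cos (θ / 4))
        = dist q p / (2 * Real.cos (θ / 4)) := by rw [dist_comm]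
      _ ≤ dist y q := far_ineq x q p y hθ hθπ hangle' h2 (hyfar q hq) (hyfar p hp)
      _ ≤ dist y z := hzfar q hq
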